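/- Let u : ℝⁿ → ℝⁿ be a C¹ divergence-free vector field, i.e. tr Du(x) = 0 for all x. Let x, ξ be differentiable curves with x'(t) = u(x(t)), ξ'(t) = −(Du(x(t)))ᵀ ξ(t), and ξ(t) ≠ 0 for all t, and let b₁, …, b_{n−1} : ℝ → ℂⁿ be differentiable solutions of the amplitude equation of the linearized Euler equation in velocity form, bᵢ'(t) = (2 ξ(t)ξ(t)ᵀ/‖ξ(t)‖² − I) Du(x(t)) bᵢ(t), satisfying bᵢ(0)·ξ(0) = 0. Then the function t ↦ det[b₁(t), …, b_{n−1}(t), ξ(t)] is constant, where det[v₁, …, vₙ] denotes the determinant of the n×n complex matrix with columns v₁, …, vₙ (ξ(t) viewed in ℂⁿ). -/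

import Mathlib

open Matrix

/-- Determinant (in the rows) as a continuous multilinear map. -/
noncomputable def detCM (n : ℕ) : ContinuousMultilinearMap ℂ (fun _ : Fin n => (Fin n → ℂ)) ℂ where
  toMultilinearMap := (Matrix.detRowAlternating : (Fin n → ℂ) [⋀^Fin n]→ₗ[ℂ] ℂ).toMultilinearMap
  cont := by
    exact (continuous_id.matrix_det : Continuous fun v : Matrix (Fin n) (Fin n) ℂ => v.det)

lemma detCM_apply {n : ℕ} (v : Fin n → Fin n → ℂ) : detCM n v = Matrix.det (Matrix.of v) := rfl

lemma detCM_alt {n : ℕ} (v : Fin n → Fin n → ℂ) :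
    detCM n v = Matrix.detRowAlternating v := rfl

lemma jacobi {n : ℕ} (M B : Matrix (Fin n) (Fin n) ℂ) :
    ∑ j, (M.updateCol j (B *ᵥ fun i => M i j)).det = B.trace * M.det := by
  have h : ∀ j, (M.updateCol j (B *ᵥ fun i => M i j)).det
      = (M.adjugate * (B * M)) j j := by
    intro j
    rw [← Matrix.cramer_apply, Matrix.cramer_eq_adjugate_mulVec]
    simp [Matrix.mulVec, Matrix.mul_apply, dotProduct]
  calc ∑ j, (M.updateCol j (B *ᵥ fun i => M i j)).det
      = (M.adjugate * (B * M)).trace := by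
        simp only [h]; rfl
    _ = ((B * M) * M.adjugate).trace := Matrix.trace_mul_comm _ _
    _ = (B * (M * M.adjugate)).trace := by rw [Matrix.mul_assoc]
    _ = B.trace * M.det := by
        rw [Matrix.mul_adjugate]
        rw [Matrix.mul_smul, Matrix.mul_one, Matrix.trace_smul]
        simp [mul_comm]

lemma vecMulVec_mulVec' {n : ℕ} (v w z : Fin n → ℂ) :
    Matrix.vecMulVec v w *ᵥ z = (w ⬝ᵥ z) • v := by
  funext i
  simp [Matrix.mulVec, Matrix.vecMulVec_apply, dotProduct, Finset.mul_sum, Finset.sum_mul,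
    mul_assoc, mul_comm, mul_left_comm]

lemma vecMul_vecMulVec' {n : ℕ} (v w z : Fin n → ℂ) :
    v ᵥ* Matrix.vecMulVec w z = (v ⬝ᵥ w) • z := by
  funext k
  simp only [Matrix.vecMul, Matrix.vecMulVec_apply, dotProduct, Pi.smul_apply, smul_eq_mul,
    Finset.sum_mul]
  exact Finset.sum_congr rfl fun i _ => by ring

lemma vecMul_smulMat {n : ℕ} (c : ℂ) (v : Fin n → ℂ) (M : Matrix (Fin n) (Fin n) ℂ) :
    v ᵥ* (c • M) = c • (v ᵥ* M) := by
  funext k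
  simp only [Matrix.vecMul, dotProduct, Matrix.smul_apply, Pi.smul_apply, smul_eq_mul,
    Finset.mul_sum]
  exact Finset.sum_congr rfl fun i _ => by ring

/-- The columns `b₁,…,b_{n-1}, ξ` as a family of vectors. -/
noncomputable def colsF {n : ℕ} (ξc : ℝ → Fin n → ℂ) (b : Fin (n - 1) → ℝ → Fin n → ℂ)
    (t : ℝ) : Fin n → Fin n → ℂ :=
  fun j => if h : (j : ℕ) < n - 1 then b ⟨j, h⟩ t else ξc t

lemma main_aux {n : ℕ} (hn : 0 < n)
    (Dm : ℝ → Matrix (Fin n) (Fin n) ℂ)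
    (htr : ∀ t, (Dm t).trace = 0)
    (ξc : ℝ → Fin n → ℂ) (hξcne : ∀ t, ξc t ≠ 0)
    (sc : ℝ → ℂ) (hsc : ∀ t, ξc t ⬝ᵥ ξc t = sc t) (hscne : ∀ t, sc t ≠ 0)
    (b : Fin (n - 1) → ℝ → Fin n → ℂ)
    (hξc' : ∀ t, HasDerivAt ξc (-((Dm t)ᵀ *ᵥ ξc t)) t)
    (hb : ∀ i t, HasDerivAt (b i)
      ((((2 / sc t) • Matrix.vecMulVec (ξc t) (ξc t) - 1) * Dm t) *ᵥ b i t) t)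
    (hb0 : ∀ i, b i 0 ⬝ᵥ ξc 0 = 0) :
    ∀ t₁ t₂ : ℝ, detCM n (colsF ξc b t₁) = detCM n (colsF ξc b t₂) := by
  classical
  set A : ℝ → Matrix (Fin n) (Fin n) ℂ :=
    fun t => ((2 / sc t) • Matrix.vecMulVec (ξc t) (ξc t) - 1) * Dm t with hA
  have hPv : ∀ t, ξc t ᵥ* ((2 / sc t) • Matrix.vecMulVec (ξc t) (ξc t) - 1) = ξc t := by
    intro t
    rw [Matrix.vecMul_sub, vecMul_smulMat, vecMul_vecMulVec', Matrix.vecMul_one, hsc,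
      smul_smul, div_mul_cancel₀ _ (hscne t)]
    funext i
    simp
    ring
  have hvA : ∀ t, ξc t ᵥ* A t = ξc t ᵥ* Dm t := by
    intro t
    rw [hA, ← Matrix.vecMul_vecMul, hPv]
  -- Step A : orthogonality is conserved
  have horth : ∀ i t, b i t ⬝ᵥ ξc t = 0 := by
    intro i
    have hg : ∀ t, HasDerivAt (fun t => b i t ⬝ᵥ ξc t) 0 t := by
      intro t
      have h1 : HasDerivAt (fun t => b i t ⬝ᵥ ξc t)
          (∑ j, ((A t *ᵥ b i t) j * ξc t j + b i t j * (-((Dm t)ᵀ *ᵥ ξc t)) j)) t := by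
        apply HasDerivAt.fun_sum
        intro j _
        exact (hasDerivAt_pi.1 (hb i t) j).mul (hasDerivAt_pi.1 (hξc' t) j)
      have h2 : (∑ j, ((A t *ᵥ b i t) j * ξc t j + b i t j * (-((Dm t)ᵀ *ᵥ ξc t)) j)) = 0 := by
        rw [Finset.sum_add_distrib]
        have e1 : (∑ j, (A t *ᵥ b i t) j * ξc t j) = (ξc t ᵥ* Dm t) ⬝ᵥ b i t := by
          have : (∑ j, (A t *ᵥ b i t) j * ξc t j) = (A t *ᵥ b i t) ⬝ᵥ ξc t := rfl
          rw [this, dotProduct_comm, Matrix.dotProduct_mulVec, hvA]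
        have e2 : (∑ j, b i t j * (-((Dm t)ᵀ *ᵥ ξc t)) j) = -((ξc t ᵥ* Dm t) ⬝ᵥ b i t) := by
          have : (∑ j, b i t j * (-((Dm t)ᵀ *ᵥ ξc t)) j) = b i t ⬝ᵥ (-((Dm t)ᵀ *ᵥ ξc t)) := rfl
          rw [this, dotProduct_neg, Matrix.mulVec_transpose, dotProduct_comm]
        rw [e1, e2, add_neg_cancel]
      exact h2 ▸ h1
    intro t
    have hconst := is_const_of_deriv_eq_zero (𝕜 := ℝ)
      (fun s => (hg s).differentiableAt) (fun s => (hg s).deriv) t 0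
    rw [hconst]
    exact hb0 i
  -- derivative of the columns
  have hC' : ∀ t (j : Fin n), HasDerivAt (fun t => colsF ξc b t j)
      (if h : (j : ℕ) < n - 1 then A t *ᵥ b ⟨j, h⟩ t else -((Dm t)ᵀ *ᵥ ξc t)) t := by
    intro t j
    by_cases h : (j : ℕ) < n - 1
    · simpa [colsF, h] using hb ⟨j, h⟩ t
    · simpa [colsF, h] using hξc' t
  -- derivative of the determinant
  have hf : ∀ t, HasDerivAt (fun t => detCM n (colsF ξc b t))
      (∑ j, detCM n (Function.update (colsF ξc b t) j
        (if h : (j : ℕ) < n - 1 then A t *ᵥ b ⟨j, h⟩ t else -((Dm t)ᵀ *ᵥ ξc t)))) t := by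
    intro t
    have hD := (detCM n).hasFDerivAt (x := colsF ξc b t)
    have hcomp := (hD.restrictScalars ℝ).comp_hasDerivAt t (hasDerivAt_pi.2 (hC' t))
    simpa [Function.comp_def, ContinuousMultilinearMap.linearDeriv_apply] using hcomp
  -- the derivative vanishes
  have hzero : ∀ t, (∑ j, detCM n (Function.update (colsF ξc b t) j
      (if h : (j : ℕ) < n - 1 then A t *ᵥ b ⟨j, h⟩ t else -((Dm t)ᵀ *ᵥ ξc t)))) = 0 := by
    intro t
    set L : Fin n := ⟨n - 1, by omega⟩ with hLdef
    set X : Fin n → ℂ :=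
      fun j => detCM n (Function.update (colsF ξc b t) j (Dm t *ᵥ colsF ξc b t j)) with hX
    set Y : ℂ := detCM n (Function.update (colsF ξc b t) L ((Dm t)ᵀ *ᵥ ξc t)) with hY
    have hL : colsF ξc b t L = ξc t := by
      simp [colsF, hLdef]
    have hupdξ : ∀ j : Fin n, (j : ℕ) < n - 1 →
        detCM n (Function.update (colsF ξc b t) j (ξc t)) = 0 := by
      intro j hj
      have hjL : j ≠ L := by
        simp only [hLdef, Fin.ext_iff, Ne]
        omega
      rw [detCM_alt]
      apply AlternatingMap.map_eq_zero_of_eq _ _ _ hjL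
      rw [Function.update_self, Function.update_of_ne (Ne.symm hjL), hL]
    have hterm : ∀ j : Fin n, detCM n (Function.update (colsF ξc b t) j
        (if h : (j : ℕ) < n - 1 then A t *ᵥ b ⟨j, h⟩ t else -((Dm t)ᵀ *ᵥ ξc t)))
        = -(X j) + (if j = L then X L - Y else 0) := by
      intro j
      by_cases h : (j : ℕ) < n - 1
      · have hjL : j ≠ L := by
          simp only [hLdef, Fin.ext_iff, Ne]
          omega
        have hcol : colsF ξc b t j = b ⟨j, h⟩ t := by simp [colsF, h]
        rw [dif_pos h, if_neg hjL, add_zero]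
        have hAvec : A t *ᵥ b ⟨j, h⟩ t
            = ((2 / sc t) * (ξc t ⬝ᵥ (Dm t *ᵥ b ⟨j, h⟩ t))) • ξc t - Dm t *ᵥ b ⟨j, h⟩ t := by
          rw [hA, ← Matrix.mulVec_mulVec, Matrix.sub_mulVec, Matrix.one_mulVec,
            Matrix.smul_mulVec, vecMulVec_mulVec', smul_smul]
        rw [hAvec, ContinuousMultilinearMap.map_update_sub, ContinuousMultilinearMap.map_update_smul,
          hupdξ j h, smul_zero, zero_sub]
        show -(detCM n) (Function.update (colsF ξc b t) j (Dm t *ᵥ b ⟨↑j, h⟩ t))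
            = -(detCM n) (Function.update (colsF ξc b t) j (Dm t *ᵥ colsF ξc b t j))
        rw [hcol]
      · have hjL : j = L := by
          have := j.isLt
          simp only [hLdef, Fin.ext_iff]
          omega
        rw [dif_neg h, hjL, if_pos rfl]
        have : -((Dm t)ᵀ *ᵥ ξc t) = (-1 : ℂ) • ((Dm t)ᵀ *ᵥ ξc t) := by
          funext i; simp
        rw [this, ContinuousMultilinearMap.map_update_smul, neg_one_smul]
        show -Y = -X L + (X L - Y)
        ring
    have hJ : ∑ j, X j = 0 := by
      have hXj : ∀ j, X j = (((Matrix.of (colsF ξc b t))ᵀ).updateCol j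
          (Dm t *ᵥ fun i => (Matrix.of (colsF ξc b t))ᵀ i j)).det := by
        intro j
        show (detCM n) (Function.update (colsF ξc b t) j (Dm t *ᵥ colsF ξc b t j))
            = (((Matrix.of (colsF ξc b t))ᵀ).updateCol j
                (Dm t *ᵥ fun i => (Matrix.of (colsF ξc b t))ᵀ i j)).det
        rw [detCM_apply, ← Matrix.det_transpose, Matrix.updateCol_transpose]
        rfl
      rw [Finset.sum_congr rfl fun j _ => hXj j, jacobi, htr, zero_mul]
    have hfin : X L - Y = 0 := by
      have hXL : X L = detCM n (Function.update (colsF ξc b t) L (Dm t *ᵥ ξc t)) := by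
        show (detCM n) (Function.update (colsF ξc b t) L (Dm t *ᵥ colsF ξc b t L)) = _
        rw [hL]
      rw [hXL, hY, ← ContinuousMultilinearMap.map_update_sub]
      rw [detCM_apply]
      apply Matrix.exists_mulVec_eq_zero_iff.mp
      refine ⟨ξc t, hξcne t, ?_⟩
      funext j
      have hrow : (Matrix.of (Function.update (colsF ξc b t) L
          (Dm t *ᵥ ξc t - (Dm t)ᵀ *ᵥ ξc t)) *ᵥ ξc t) j
          = (Function.update (colsF ξc b t) L (Dm t *ᵥ ξc t - (Dm t)ᵀ *ᵥ ξc t)) j ⬝ᵥ ξc t := rfl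
      rw [hrow]
      by_cases hj : j = L
      · rw [hj, Function.update_self, sub_dotProduct]
        have e1 : (Dm t *ᵥ ξc t) ⬝ᵥ ξc t = (ξc t ᵥ* Dm t) ⬝ᵥ ξc t := by
          rw [dotProduct_comm, Matrix.dotProduct_mulVec]
        have e2 : ((Dm t)ᵀ *ᵥ ξc t) ⬝ᵥ ξc t = (ξc t ᵥ* Dm t) ⬝ᵥ ξc t := by
          rw [Matrix.mulVec_transpose]
        rw [e1, e2, sub_self]
        simp
      · have hjlt : (j : ℕ) < n - 1 := by
          have := j.isLt
          simp only [hLdef, Fin.ext_iff] at hj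
          omega
        rw [Function.update_of_ne hj]
        have : colsF ξc b t j = b ⟨j, hjlt⟩ t := by simp [colsF, hjlt]
        rw [this, horth]
        simp
    calc (∑ j, detCM n (Function.update (colsF ξc b t) j
        (if h : (j : ℕ) < n - 1 then A t *ᵥ b ⟨j, h⟩ t else -((Dm t)ᵀ *ᵥ ξc t))))
        = ∑ j, (-(X j) + (if j = L then X L - Y else 0)) :=
          Finset.sum_congr rfl fun j _ => hterm j
      _ = 0 := by
          rw [Finset.sum_add_distrib, Finset.sum_neg_distrib, hJ, neg_zero, zero_add,
            Finset.sum_ite_eq' Finset.univ L (fun _ => X L - Y), if_pos (Finset.mem_univ L), hfin]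
  intro t₁ t₂
  exact is_const_of_deriv_eq_zero (𝕜 := ℝ) (fun t => (hf t).differentiableAt)
    (fun t => by rw [(hf t).deriv, hzero t]) t₁ t₂

/-- The Jacobian matrix `Du(x)` of a vector field `u : ℝⁿ → ℝⁿ`. -/
noncomputable def jacobian {n : ℕ} (u : (Fin n → ℝ) → (Fin n → ℝ)) (x : Fin n → ℝ) :
    Matrix (Fin n) (Fin n) ℝ :=
  Matrix.of fun i j => fderiv ℝ u x (Pi.single j 1) i

/-- For the linearized Euler equation in velocity form
(`bᵢ' = (2ξξᵀ/‖ξ‖² − I) Du(x) bᵢ`) with a divergence-free `u`, the determinant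
`det[b₁,…,b_{n−1},ξ]` is conserved. -/
theorem stmt_4 {n : ℕ}
    (u : (Fin n → ℝ) → (Fin n → ℝ)) (hu : ContDiff ℝ 1 u)
    (hdiv : ∀ y, Matrix.trace (jacobian u y) = 0)
    (x : ℝ → Fin n → ℝ) (ξ : ℝ → Fin n → ℝ) (b : Fin (n - 1) → ℝ → Fin n → ℂ)
    (hξne : ∀ t, ξ t ≠ 0)
    (hx : ∀ t, HasDerivAt x (u (x t)) t)
    (hξ : ∀ t, HasDerivAt ξ (-((jacobian u (x t)).transpose.mulVec (ξ t))) t)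
    (hb : ∀ i t, HasDerivAt (b i)
      (((((2 / (∑ j, ξ t j ^ 2)) • Matrix.vecMulVec (ξ t) (ξ t) - 1)
          * jacobian u (x t)).map Complex.ofReal).mulVec (b i t)) t)
    (hb0 : ∀ i, (∑ j, b i 0 j * (ξ 0 j : ℂ)) = 0) :
    ∀ t₁ t₂ : ℝ,
      Matrix.det (Matrix.of fun i (j : Fin n) =>
          if h : (j : ℕ) < n - 1 then b ⟨j, h⟩ t₁ i else (ξ t₁ i : ℂ))
      = Matrix.det (Matrix.of fun i (j : Fin n) =>
          if h : (j : ℕ) < n - 1 then b ⟨j, h⟩ t₂ i else (ξ t₂ i : ℂ)) := by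
  classical
  rcases Nat.eq_zero_or_pos n with hn | hn
  · subst hn
    intro t₁ t₂
    simp [Matrix.det_fin_zero]
  set ξc : ℝ → Fin n → ℂ := fun t i => (ξ t i : ℂ) with hξcdef
  set Dm : ℝ → Matrix (Fin n) (Fin n) ℂ := fun t => (jacobian u (x t)).map Complex.ofReal
    with hDmdef
  set sc : ℝ → ℂ := fun t => ((∑ j, ξ t j ^ 2 : ℝ) : ℂ) with hscdef
  -- the real sum of squares is nonzero
  have hsne : ∀ t, (∑ j, ξ t j ^ 2 : ℝ) ≠ 0 := by
    intro t hsum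
    apply hξne t
    funext i
    have hnn : ∀ j ∈ Finset.univ, (0:ℝ) ≤ ξ t j ^ 2 := fun j _ => sq_nonneg _
    have := (Finset.sum_eq_zero_iff_of_nonneg hnn).1 hsum i (Finset.mem_univ i)
    have := pow_eq_zero_iff (n := 2) (by norm_num) |>.1 this
    simpa using this
  have hscne : ∀ t, sc t ≠ 0 := by
    intro t h
    apply hsne t
    have h' : ((∑ j, ξ t j ^ 2 : ℝ) : ℂ) = 0 := h
    exact_mod_cast h'
  have hξcne : ∀ t, ξc t ≠ 0 := by
    intro t h
    apply hξne t
    funext i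
    have := congrFun h i
    simpa [hξcdef] using this
  have hsc : ∀ t, ξc t ⬝ᵥ ξc t = sc t := by
    intro t
    simp only [hξcdef, hscdef, dotProduct]
    push_cast
    exact Finset.sum_congr rfl fun j _ => by ring
  have htr : ∀ t, (Dm t).trace = 0 := by
    intro t
    have : (Dm t).trace = ((jacobian u (x t)).trace : ℂ) := by
      simp [hDmdef, Matrix.trace, Matrix.diag, Matrix.map_apply]
    rw [this, hdiv, Complex.ofReal_zero]
  have hξc' : ∀ t, HasDerivAt ξc (-((Dm t)ᵀ *ᵥ ξc t)) t := by
    intro t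
    apply hasDerivAt_pi.2
    intro j
    have h1 := (hasDerivAt_pi.1 (hξ t) j).ofReal_comp
    have h2 : ((-((jacobian u (x t))ᵀ *ᵥ ξ t)) j : ℂ) = (-((Dm t)ᵀ *ᵥ ξc t)) j := by
      simp only [Pi.neg_apply, Matrix.mulVec, dotProduct, Matrix.transpose_apply,
        Matrix.map_apply, hDmdef, hξcdef]
      push_cast
      ring_nf
    rw [h2] at h1
    exact h1
  -- the complex amplitude matrix
  have hAm : ∀ t, ((((2 / (∑ j, ξ t j ^ 2)) • Matrix.vecMulVec (ξ t) (ξ t) - 1)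
      * jacobian u (x t)).map Complex.ofReal)
      = ((2 / sc t) • Matrix.vecMulVec (ξc t) (ξc t) - 1) * Dm t := by
    intro t
    ext i k
    simp only [Matrix.map_apply, Matrix.mul_apply, Matrix.sub_apply, Matrix.smul_apply,
      Matrix.vecMulVec_apply, Matrix.one_apply, smul_eq_mul, hDmdef, hξcdef, hscdef]
    push_cast
    refine Finset.sum_congr rfl fun l _ => ?_
    by_cases hil : i = l <;> simp [hil]
  have hbc : ∀ i t, HasDerivAt (b i)
      ((((2 / sc t) • Matrix.vecMulVec (ξc t) (ξc t) - 1) * Dm t) *ᵥ b i t) t := by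
    intro i t
    have := hb i t
    rwa [hAm t] at this
  have hb0c : ∀ i, b i 0 ⬝ᵥ ξc 0 = 0 := fun i => hb0 i
  have key := main_aux hn Dm htr ξc hξcne sc hsc hscne b hξc' hbc hb0c
  intro t₁ t₂
  have hmat : ∀ t, Matrix.det (Matrix.of fun i (j : Fin n) =>
      if h : (j : ℕ) < n - 1 then b ⟨j, h⟩ t i else (ξ t i : ℂ)) = detCM n (colsF ξc b t) := by
    intro t
    rw [detCM_apply, ← Matrix.det_transpose (Matrix.of (colsF ξc b t))]
    congr 1
    ext i j
    simp only [Matrix.transpose_apply, Matrix.of_apply, colsF]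
    by_cases h : (j : ℕ) < n - 1 <;> simp [h, hξcdef]
  rw [hmat t₁, hmat t₂]
  exact key t₁ t₂
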